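/- Let A be an expanding integer n×n matrix and K ⊂ ℤⁿ finite. Two elements ξ = (…x₂x₁, v) and ζ = (…y₂y₁, u) with x_i, y_i ∈ K and u, v ∈ ℤⁿ satisfy Φ(ξ) = Φ(ζ) if and only if there exists a finite set B ⊂ ℤⁿ and a sequence (v_m)_{m≥1} in B with v_m + x_m + A x_{m-1} + … + A^{m-1} x₁ + A^m v = y_m + A y_{m-1} + … + A^{m-1} y₁ + A^m u for every m ≥ 1. -/

import Mathlib

open Matrix Filter
open scoped ENNReal NNReal

def IsExpanding {n : ℕ} (A : Matrix (Fin n) (Fin n) ℤ) : Prop :=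
  ∀ μ : ℂ, (A.map (Int.cast : ℤ → ℂ)).charpoly.IsRoot μ → 1 < ‖μ‖

private lemma charpoly_eval_aux {N : Type*} [DecidableEq N] [Fintype N] {R : Type*} [CommRing R]
    (M : Matrix N N R) (μ : R) :
    M.charpoly.eval μ = (Matrix.diagonal (fun _ => μ) - M).det := by
  rw [Matrix.charpoly]
  show (Polynomial.evalRingHom μ) (Matrix.charmatrix M).det = _
  rw [RingHom.map_det]
  congr 1
  ext i j
  by_cases h : i = j <;>
    simp [Matrix.charmatrix_apply, Matrix.diagonal, h, Matrix.map_apply]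

attribute [local instance] Matrix.linftyOpNormedRing Matrix.linftyOpNormedAlgebra

private lemma root_of_mem_spectrum {N : Type*} [DecidableEq N] [Fintype N]
    (M : Matrix N N ℂ) {μ : ℂ} (h : μ ∈ spectrum ℂ M) : M.charpoly.IsRoot μ := by
  rw [spectrum.mem_iff] at h
  rw [Polynomial.IsRoot, charpoly_eval_aux]
  by_contra hdet
  apply h
  rw [Matrix.isUnit_iff_isUnit_det, isUnit_iff_ne_zero]
  have : algebraMap ℂ (Matrix N N ℂ) μ = Matrix.diagonal (fun _ => μ) := by
    rw [Matrix.algebraMap_eq_diagonal]; rfl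
  rw [this]
  exact hdet

private lemma geom_bound {n : ℕ} (hn : 0 < n) (A : Matrix (Fin n) (Fin n) ℤ)
    (hA : IsExpanding A) :
    ∃ C r : ℝ, 0 < C ∧ 0 < r ∧ r < 1 ∧ (A.map (Int.cast : ℤ → ℝ)).det ≠ 0 ∧
      ∀ (k : ℕ) (z : Fin n → ℝ),
        ‖((A.map (Int.cast : ℤ → ℝ))⁻¹ ^ k) *ᵥ z‖ ≤ C * r ^ k * ‖z‖ := by
  haveI : NeZero n := ⟨hn.ne'⟩
  set M : Matrix (Fin n) (Fin n) ℝ := A.map (Int.cast : ℤ → ℝ) with hM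
  set Mc : Matrix (Fin n) (Fin n) ℂ := A.map (Int.cast : ℤ → ℂ) with hMc
  have hmap : Mc = M.map Complex.ofRealHom := by
    ext i j; simp [hM, hMc, Matrix.map_apply]
  -- determinant of Mc nonzero
  have hdetc : Mc.det ≠ 0 := by
    intro h0
    have : Mc.charpoly.IsRoot 0 := by
      rw [Polynomial.IsRoot, charpoly_eval_aux]
      have : Matrix.diagonal (fun _ : Fin n => (0 : ℂ)) - Mc = -Mc := by
        simp
      rw [this, Matrix.det_neg, h0, mul_zero]
    exact absurd (hA 0 this) (by simp)
  have hdet : M.det ≠ 0 := by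
    intro h0
    apply hdetc
    rw [hmap, ← RingHom.mapMatrix_apply, ← RingHom.map_det, h0, map_zero]
  have hU : IsUnit Mc := (Matrix.isUnit_iff_isUnit_det _).2 (isUnit_iff_ne_zero.2 hdetc)
  -- spectrum of Mc⁻¹ is inside the open unit ball
  have hspec : ∀ ν ∈ spectrum ℂ (Mc⁻¹), ‖ν‖₊ < 1 := by
    intro ν hν
    have hcoe : (↑hU.unit⁻¹ : Matrix (Fin n) (Fin n) ℂ) = Mc⁻¹ := by
      rw [Matrix.coe_units_inv, hU.unit_spec]
    rw [← hcoe, ← spectrum.map_inv hU.unit, hU.unit_spec, Set.mem_inv] at hν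
    have hroot := root_of_mem_spectrum Mc hν
    have h1 := hA _ hroot
    rw [norm_inv] at h1
    rcases eq_or_ne ν 0 with h | h
    · exact absurd (h ▸ h1) (by norm_num)
    · rw [← NNReal.coe_lt_coe]
      push_cast
      exact (one_lt_inv_iff₀.mp h1).2
  -- spectral radius < 1
  haveI : CompleteSpace (Matrix (Fin n) (Fin n) ℂ) := FiniteDimensional.complete ℂ _
  have hsr : spectralRadius ℂ (Mc⁻¹) < 1 := by
    have := spectrum.spectralRadius_lt_of_forall_lt (Mc⁻¹) (r := 1) hspec
    simpa using this
  obtain ⟨r', hr'1, hr'2⟩ := ENNReal.lt_iff_exists_nnreal_btwn.mp hsr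
  have hr'pos : 0 < r' := by
    rcases eq_or_lt_of_le (zero_le : (0:ℝ≥0) ≤ r') with h | h
    · exact absurd (h ▸ hr'1) (by simp)
    · exact h
  have hr'lt1 : (r' : ℝ) < 1 := by exact_mod_cast hr'2
  -- Gelfand: eventually ‖(Mc⁻¹)^k‖ ≤ r'^k
  obtain ⟨N, hN⟩ := Filter.eventually_atTop.mp
    ((spectrum.pow_nnnorm_pow_one_div_tendsto_nhds_spectralRadius (Mc⁻¹)).eventually_lt_const hr'1)
  have hgeo : ∀ k, N ≤ k → 1 ≤ k → ‖Mc⁻¹ ^ k‖ ≤ (r' : ℝ) ^ k := by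
    intro k hk hk1
    have h1 := (hN k hk).le
    have hk0 : ((k:ℝ)) ≠ 0 := by
      have : (0:ℕ) < k := hk1
      positivity
    have h2 : ((‖Mc⁻¹ ^ k‖₊ : ℝ≥0∞) ^ ((1:ℝ) / k)) ^ (k : ℝ) ≤ (r' : ℝ≥0∞) ^ (k : ℝ) :=
      ENNReal.rpow_le_rpow h1 (by positivity)
    rw [← ENNReal.rpow_mul, one_div, inv_mul_cancel₀ hk0, ENNReal.rpow_one,
      ENNReal.rpow_natCast, ← ENNReal.coe_pow, ENNReal.coe_le_coe] at h2
    calc ‖Mc⁻¹ ^ k‖ = ((‖Mc⁻¹ ^ k‖₊ : ℝ)) := rfl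
      _ ≤ ((r' ^ k : ℝ≥0) : ℝ) := by exact_mod_cast h2
      _ = (r' : ℝ) ^ k := by push_cast; ring
  -- a uniform constant
  set N' : ℕ := max N 1 with hN'
  set r : ℝ := (r' : ℝ) with hrdef
  have hrpos : 0 < r := by exact_mod_cast hr'pos
  set C : ℝ := 1 + ∑ j ∈ Finset.range N', ‖Mc⁻¹ ^ j‖ / r ^ j with hC
  have hsumnonneg : (0:ℝ) ≤ ∑ j ∈ Finset.range N', ‖Mc⁻¹ ^ j‖ / r ^ j :=
    Finset.sum_nonneg fun j _ => by positivity
  have hCpos : (0:ℝ) < C := by rw [hC]; linarith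
  have hC1 : (1:ℝ) ≤ C := by rw [hC]; linarith
  have hnorm_pow : ∀ k, ‖Mc⁻¹ ^ k‖ ≤ C * r ^ k := by
    intro k
    rcases lt_or_ge k N' with hk | hk
    · have h1 : ‖Mc⁻¹ ^ k‖ / r ^ k ≤ ∑ j ∈ Finset.range N', ‖Mc⁻¹ ^ j‖ / r ^ j :=
        Finset.single_le_sum (f := fun j => ‖Mc⁻¹ ^ j‖ / r ^ j)
          (fun j _ => by positivity) (Finset.mem_range.mpr hk)
      have h2 : ‖Mc⁻¹ ^ k‖ / r ^ k ≤ C := by rw [hC]; linarith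
      calc ‖Mc⁻¹ ^ k‖ = (‖Mc⁻¹ ^ k‖ / r ^ k) * r ^ k := by
            field_simp
        _ ≤ C * r ^ k := by
            apply mul_le_mul_of_nonneg_right h2 (by positivity)
    · have := hgeo k (le_trans (le_max_left _ _) hk) (le_trans (le_max_right _ _) hk)
      calc ‖Mc⁻¹ ^ k‖ ≤ r ^ k := this
        _ ≤ C * r ^ k := le_mul_of_one_le_left (by positivity) hC1
  -- bridge from ℂ matrices to ℝ vectors
  have hMdetU : IsUnit M.det := isUnit_iff_ne_zero.2 hdet
  have hMcinv : Mc⁻¹ = (M⁻¹).map Complex.ofRealHom := by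
    apply Matrix.inv_eq_left_inv
    have := Matrix.nonsing_inv_mul M hMdetU
    calc (M⁻¹).map Complex.ofRealHom * Mc
        = (M⁻¹).map Complex.ofRealHom * M.map Complex.ofRealHom := by rw [hmap]
      _ = (M⁻¹ * M).map Complex.ofRealHom := (Matrix.map_mul).symm
      _ = (1 : Matrix (Fin n) (Fin n) ℝ).map Complex.ofRealHom := by rw [this]
      _ = 1 := by
          rw [← RingHom.mapMatrix_apply, _root_.map_one]
  have hpowmap : ∀ k, Mc⁻¹ ^ k = (M⁻¹ ^ k).map Complex.ofRealHom := by
    intro k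
    rw [hMcinv, ← RingHom.mapMatrix_apply, ← RingHom.mapMatrix_apply, ← map_pow]
  have hvecnorm : ∀ w : Fin n → ℝ, ‖(fun i => (w i : ℂ))‖ = ‖w‖ := by
    intro w
    simp only [Pi.norm_def, Pi.nnnorm_def]
    congr 1
    apply Finset.sup_congr rfl
    intro i _
    simp [Complex.nnnorm_real]
  refine ⟨C, r, hCpos, hrpos, hr'lt1, hdet, fun k z => ?_⟩
  have hcast : (fun i => ((M⁻¹ ^ k *ᵥ z) i : ℂ)) = (Mc⁻¹ ^ k) *ᵥ (fun i => (z i : ℂ)) := by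
    funext i
    rw [hpowmap]
    exact RingHom.map_mulVec Complex.ofRealHom (M⁻¹ ^ k) z i
  calc ‖M⁻¹ ^ k *ᵥ z‖ = ‖(fun i => ((M⁻¹ ^ k *ᵥ z) i : ℂ))‖ := (hvecnorm _).symm
    _ = ‖(Mc⁻¹ ^ k) *ᵥ (fun i => (z i : ℂ))‖ := by rw [hcast]
    _ ≤ ‖Mc⁻¹ ^ k‖ * ‖(fun i => (z i : ℂ))‖ := Matrix.linfty_opNorm_mulVec _ _
    _ = ‖Mc⁻¹ ^ k‖ * ‖z‖ := by rw [hvecnorm]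
    _ ≤ (C * r ^ k) * ‖z‖ := by
        apply mul_le_mul_of_nonneg_right (hnorm_pow k) (norm_nonneg _)

private def castH (n : ℕ) : (Fin n → ℤ) →+ (Fin n → ℝ) where
  toFun z := fun i => (z i : ℝ)
  map_zero' := by funext i; simp
  map_add' a b := by funext i; simp

private lemma castH_mulVec {n : ℕ} (B : Matrix (Fin n) (Fin n) ℤ) (z : Fin n → ℤ) :
    castH n (B *ᵥ z) = (B.map (Int.cast : ℤ → ℝ)) *ᵥ (castH n z) := by
  funext i
  exact RingHom.map_mulVec (Int.castRingHom ℝ) B z i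

private lemma castH_pow_mulVec {n : ℕ} (A : Matrix (Fin n) (Fin n) ℤ) (j : ℕ) (z : Fin n → ℤ) :
    castH n ((A ^ j) *ᵥ z) = ((A.map (Int.cast : ℤ → ℝ)) ^ j) *ᵥ (castH n z) := by
  rw [castH_mulVec]
  have h := map_pow (Int.castRingHom ℝ).mapMatrix A j
  rw [RingHom.mapMatrix_apply, RingHom.mapMatrix_apply] at h
  exact congrArg (· *ᵥ castH n z) h

/-- `Φ(…x₂x₁, v) = Φ(…y₂y₁, u)` iff there is a finite set `B` and a
sequence `(v_m)` in `B` with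
`v_m + x_m + A x_{m-1} + … + A^{m-1} x₁ + A^m v = y_m + A y_{m-1} + … + A^{m-1} y₁ + A^m u`
for every `m ≥ 1`.  (Sequences are indexed so that `x k` is `x_{k+1}`.) -/
theorem stmt5 {n : ℕ} (A : Matrix (Fin n) (Fin n) ℤ) (hA : IsExpanding A)
    (K : Finset (Fin n → ℤ)) (x y : ℕ → (Fin n → ℤ))
    (hx : ∀ k, x k ∈ K) (hy : ∀ k, y k ∈ K) (v u : Fin n → ℤ) :
    ((fun i => (v i : ℝ)) + ∑' k, ((A.map (Int.cast : ℤ → ℝ))⁻¹ ^ (k + 1)).mulVec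
        (fun i => (x k i : ℝ)) =
      (fun i => (u i : ℝ)) + ∑' k, ((A.map (Int.cast : ℤ → ℝ))⁻¹ ^ (k + 1)).mulVec
        (fun i => (y k i : ℝ))) ↔
    ∃ (B : Finset (Fin n → ℤ)) (w : ℕ → (Fin n → ℤ)), (∀ m, w m ∈ B) ∧
      ∀ m : ℕ, 1 ≤ m →
        w m + (∑ i ∈ Finset.range m, (A ^ i).mulVec (x (m - 1 - i))) + (A ^ m).mulVec v =
          (∑ i ∈ Finset.range m, (A ^ i).mulVec (y (m - 1 - i))) + (A ^ m).mulVec u := by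
  rcases Nat.eq_zero_or_pos n with hn | hn
  · subst hn
    constructor
    · intro _
      exact ⟨{0}, fun _ => 0, fun m => Finset.mem_singleton_self 0,
        fun m _ => Subsingleton.elim _ _⟩
    · intro _
      exact Subsingleton.elim _ _
  obtain ⟨C, r, hC, hr0, hr1, hdet, hbound⟩ := geom_bound hn A hA
  set M : Matrix (Fin n) (Fin n) ℝ := A.map (Int.cast : ℤ → ℝ) with hMdef
  set cH := castH n with hcH
  -- cancellation lemmas
  have hMdetU : IsUnit M.det := isUnit_iff_ne_zero.2 hdet
  have hinvmul : M⁻¹ * M = 1 := Matrix.nonsing_inv_mul M hMdetU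
  have hmulinv : M * M⁻¹ = 1 := Matrix.mul_nonsing_inv M hMdetU
  have hpowcancel : ∀ j, M ^ j * M⁻¹ ^ j = 1 := by
    intro j
    induction j with
    | zero => simp
    | succ j ih =>
        rw [pow_succ, pow_succ']
        calc M ^ j * M * (M⁻¹ * M⁻¹ ^ j) = M ^ j * (M * M⁻¹) * M⁻¹ ^ j := by
              noncomm_ring
          _ = M ^ j * M⁻¹ ^ j := by rw [hmulinv, mul_one]
          _ = 1 := ih
  have hpowcancel' : ∀ j, M⁻¹ ^ j * M ^ j = 1 := by
    intro j
    induction j with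
    | zero => simp
    | succ j ih =>
        rw [pow_succ, pow_succ']
        calc M⁻¹ ^ j * M⁻¹ * (M * M ^ j) = M⁻¹ ^ j * (M⁻¹ * M) * M ^ j := by
              noncomm_ring
          _ = M⁻¹ ^ j * M ^ j := by rw [hinvmul, mul_one]
          _ = 1 := ih
  -- the sequences over ℝ
  set fx : ℕ → (Fin n → ℝ) := fun k => (M⁻¹ ^ (k + 1)) *ᵥ cH (x k) with hfx
  set fy : ℕ → (Fin n → ℝ) := fun k => (M⁻¹ ^ (k + 1)) *ᵥ cH (y k) with hfy
  set Kb : ℝ := ∑ z ∈ K, ‖cH z‖ with hKb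
  have hKbz : ∀ z ∈ K, ‖cH z‖ ≤ Kb :=
    fun z hz => Finset.single_le_sum (f := fun z => ‖cH z‖) (fun _ _ => norm_nonneg _) hz
  have hKb0 : 0 ≤ Kb := Finset.sum_nonneg fun _ _ => norm_nonneg _
  have hgenbound : ∀ (z : ℕ → Fin n → ℤ), (∀ k, z k ∈ K) → ∀ j k,
      ‖(M⁻¹ ^ (k + 1)) *ᵥ cH (z j)‖ ≤ C * Kb * r * r ^ k := by
    intro z hz j k
    calc ‖(M⁻¹ ^ (k + 1)) *ᵥ cH (z j)‖ ≤ C * r ^ (k+1) * ‖cH (z j)‖ := hbound (k+1) _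
      _ ≤ C * r ^ (k+1) * Kb := by
          apply mul_le_mul_of_nonneg_left (hKbz _ (hz j)) (by positivity)
      _ = C * Kb * r * r ^ k := by ring
  have hgeom : Summable fun k : ℕ => C * Kb * r * r ^ k :=
    (summable_geometric_of_lt_one hr0.le hr1).mul_left _
  have hsx : Summable fx := Summable.of_norm_bounded hgeom fun k => hgenbound x hx k k
  have hsy : Summable fy := Summable.of_norm_bounded hgeom fun k => hgenbound y hy k k
  set Tx : Fin n → ℝ := ∑' k, fx k with hTx
  set Ty : Fin n → ℝ := ∑' k, fy k with hTy
  -- key cast identity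
  have hkeypow : ∀ m k, k < m → M ^ m * M⁻¹ ^ (k + 1) = M ^ (m - 1 - k) := by
    intro m k hkm
    have hsplit : M ^ m = M ^ (m - 1 - k) * M ^ (k + 1) := by
      rw [← pow_add]; congr 1; omega
    rw [hsplit, mul_assoc, hpowcancel, mul_one]
  have hmulVec_sum : ∀ (B : Matrix (Fin n) (Fin n) ℝ) (s : Finset ℕ) (g : ℕ → (Fin n → ℝ)),
      B *ᵥ (∑ k ∈ s, g k) = ∑ k ∈ s, B *ᵥ g k := by
    intro B s g
    exact map_sum B.mulVecLin g s
  have hcastSum : ∀ (z : ℕ → Fin n → ℤ) (zf : ℕ → Fin n → ℝ)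
      (hzf : ∀ k, zf k = (M⁻¹ ^ (k + 1)) *ᵥ cH (z k)) (c : Fin n → ℤ) (m : ℕ),
      cH ((∑ i ∈ Finset.range m, (A ^ i) *ᵥ (z (m - 1 - i))) + (A ^ m) *ᵥ c)
        = (M ^ m) *ᵥ (cH c + ∑ k ∈ Finset.range m, zf k) := by
    intro z zf hzf c m
    rw [map_add, map_sum, Matrix.mulVec_add, hmulVec_sum, add_comm ((M ^ m) *ᵥ cH c)]
    congr 1
    · calc ∑ i ∈ Finset.range m, cH ((A ^ i) *ᵥ z (m - 1 - i))
          = ∑ i ∈ Finset.range m, (M ^ i) *ᵥ cH (z (m - 1 - i)) := by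
            refine Finset.sum_congr rfl fun i _ => ?_
            exact castH_pow_mulVec A i _
        _ = ∑ i ∈ Finset.range m, (fun k => (M ^ (m - 1 - k)) *ᵥ cH (z k)) (m - 1 - i) := by
            refine Finset.sum_congr rfl fun i hi => ?_
            have : m - 1 - (m - 1 - i) = i := by
              have := Finset.mem_range.mp hi; omega
            simp only [this]
        _ = ∑ k ∈ Finset.range m, (M ^ (m - 1 - k)) *ᵥ cH (z k) :=
            Finset.sum_range_reflect (fun k => (M ^ (m - 1 - k)) *ᵥ cH (z k)) m
        _ = ∑ k ∈ Finset.range m, (M ^ m) *ᵥ zf k := by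
            refine Finset.sum_congr rfl fun k hk => ?_
            rw [hzf k, Matrix.mulVec_mulVec, hkeypow m k (Finset.mem_range.mp hk)]
    · exact castH_pow_mulVec A m c
  -- continuous-linear-map tsum pushing
  have hCLM : ∀ (B : Matrix (Fin n) (Fin n) ℝ) (g : ℕ → (Fin n → ℝ)), Summable g →
      B *ᵥ (∑' i, g i) = ∑' i, B *ᵥ g i := by
    intro B g hg
    have := (LinearMap.toContinuousLinearMap B.mulVecLin).map_tsum hg
    simpa using this
  constructor
  · -- forward direction
    intro h
    have h' : cH v + Tx = cH u + Ty := h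
    have hcancel2 : ∀ m j, M ^ m * M⁻¹ ^ (m + j) = M⁻¹ ^ j := by
      intro m j
      rw [pow_add, ← mul_assoc, hpowcancel, one_mul]
    set wZ : ℕ → (Fin n → ℤ) := fun m =>
      (∑ i ∈ Finset.range m, (A ^ i) *ᵥ (y (m - 1 - i))) + (A ^ m) *ᵥ u
        - ((∑ i ∈ Finset.range m, (A ^ i) *ᵥ (x (m - 1 - i))) + (A ^ m) *ᵥ v) with hwZ
    have hshift : ∀ (g : ℕ → Fin n → ℝ), Summable g → ∀ m,
        ∑ k ∈ Finset.range m, g k = (∑' k, g k) - ∑' i, g (i + m) := by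
      intro g hg m
      exact eq_sub_of_add_eq (Summable.sum_add_tsum_nat_add m hg)
    have htailid : ∀ m, cH (wZ m) =
        (∑' i, (M⁻¹ ^ (i + 1)) *ᵥ cH (x (i + m)))
          - ∑' i, (M⁻¹ ^ (i + 1)) *ᵥ cH (y (i + m)) := by
      intro m
      have hx' := hcastSum x fx (fun k => rfl) v m
      have hy' := hcastSum y fy (fun k => rfl) u m
      have hstep : cH (wZ m) = (M ^ m) *ᵥ
          ((cH u + ∑ k ∈ Finset.range m, fy k) - (cH v + ∑ k ∈ Finset.range m, fx k)) := by
        rw [hwZ]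
        simp only [map_sub, hx', hy', Matrix.mulVec_sub]
      have hdiffeq : (cH u + ∑ k ∈ Finset.range m, fy k)
            - (cH v + ∑ k ∈ Finset.range m, fx k)
          = (∑' i, fx (i + m)) - ∑' i, fy (i + m) := by
        rw [hshift fx hsx m, hshift fy hsy m]
        have h0 : (cH u + Ty) - (cH v + Tx) = 0 := by rw [← h']; abel
        calc cH u + (Ty - ∑' i, fy (i + m)) - (cH v + (Tx - ∑' i, fx (i + m)))
            = ((cH u + Ty) - (cH v + Tx))
                + ((∑' i, fx (i + m)) - ∑' i, fy (i + m)) := by abel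
          _ = (∑' i, fx (i + m)) - ∑' i, fy (i + m) := by rw [h0, zero_add]
      have hsxs : Summable fun i => fx (i + m) := (summable_nat_add_iff m).2 hsx
      have hsys : Summable fun i => fy (i + m) := (summable_nat_add_iff m).2 hsy
      have hpush : ∀ (z : ℕ → Fin n → ℤ) (zf : ℕ → Fin n → ℝ)
          (hzf : ∀ k, zf k = (M⁻¹ ^ (k + 1)) *ᵥ cH (z k)) (hs : Summable fun i => zf (i + m)),
          (M ^ m) *ᵥ (∑' i, zf (i + m)) = ∑' i, (M⁻¹ ^ (i + 1)) *ᵥ cH (z (i + m)) := by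
        intro z zf hzf hs
        rw [hCLM _ _ hs]
        congr 1
        funext i
        rw [hzf (i + m), Matrix.mulVec_mulVec]
        have : i + m + 1 = m + (i + 1) := by omega
        rw [this, hcancel2]
      rw [hstep, hdiffeq, Matrix.mulVec_sub, hpush x fx (fun _ => rfl) hsxs,
        hpush y fy (fun _ => rfl) hsys]
    have hDtail : ∀ (z : ℕ → Fin n → ℤ), (∀ k, z k ∈ K) → ∀ (m : ℕ),
        ‖∑' i, (M⁻¹ ^ (i + 1)) *ᵥ cH (z (i + m))‖ ≤ C * Kb * r * (1 - r)⁻¹ := by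
      intro z hz m
      have hsummableN : Summable fun i => ‖(M⁻¹ ^ (i + 1)) *ᵥ cH (z (i + m))‖ :=
        Summable.of_nonneg_of_le (fun _ => norm_nonneg _)
          (fun i => hgenbound z hz (i + m) i) hgeom
      calc ‖∑' i, (M⁻¹ ^ (i + 1)) *ᵥ cH (z (i + m))‖
          ≤ ∑' i, ‖(M⁻¹ ^ (i + 1)) *ᵥ cH (z (i + m))‖ := norm_tsum_le_tsum_norm hsummableN
        _ ≤ ∑' i, C * Kb * r * r ^ i :=
            Summable.tsum_le_tsum (fun i => hgenbound z hz (i + m) i) hsummableN hgeom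
        _ = C * Kb * r * (1 - r)⁻¹ := by
            rw [tsum_mul_left, tsum_geometric_of_lt_one hr0.le hr1]
    set D : ℝ := C * Kb * r * (1 - r)⁻¹ + C * Kb * r * (1 - r)⁻¹ with hD
    have hwbound : ∀ m, ‖cH (wZ m)‖ ≤ D := by
      intro m
      rw [htailid m]
      exact (norm_sub_le _ _).trans (add_le_add (hDtail x hx m) (hDtail y hy m))
    refine ⟨Fintype.piFinset (fun _ : Fin n => Finset.Icc (-⌈D⌉) ⌈D⌉), wZ, fun m => ?_,
      fun m _ => by simp only [hwZ]; abel⟩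
    rw [Fintype.mem_piFinset]
    intro i
    rw [Finset.mem_Icc, ← abs_le]
    have h1 : |(wZ m i : ℝ)| ≤ D := by
      calc |(wZ m i : ℝ)| = ‖cH (wZ m) i‖ := by rw [Real.norm_eq_abs]; rfl
        _ ≤ ‖cH (wZ m)‖ := norm_le_pi_norm _ i
        _ ≤ D := hwbound m
    have h2 : ((|wZ m i| : ℤ) : ℝ) ≤ ((⌈D⌉ : ℤ) : ℝ) := by
      push_cast
      exact h1.trans (Int.le_ceil D)
    exact_mod_cast h2
  · -- backward direction
    rintro ⟨B, w, hwB, hw⟩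
    show cH v + Tx = cH u + Ty
    set Bb : ℝ := ∑ z ∈ B, ‖cH z‖ with hBbdef
    have hBb : ∀ m, ‖cH (w m)‖ ≤ Bb := fun m =>
      Finset.single_le_sum (f := fun z => ‖cH z‖) (fun _ _ => norm_nonneg _) (hwB m)
    have hdiff : ∀ m, 1 ≤ m →
        (cH u + ∑ k ∈ Finset.range m, fy k) - (cH v + ∑ k ∈ Finset.range m, fx k)
          = (M⁻¹ ^ m) *ᵥ cH (w m) := by
      intro m hm
      have e : w m + ((∑ i ∈ Finset.range m, (A ^ i) *ᵥ (x (m - 1 - i))) + (A ^ m) *ᵥ v)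
          = (∑ i ∈ Finset.range m, (A ^ i) *ᵥ (y (m - 1 - i))) + (A ^ m) *ᵥ u := by
        rw [← add_assoc]; exact hw m hm
      have h1 := congrArg cH e
      rw [map_add, hcastSum x fx (fun _ => rfl) v m, hcastSum y fy (fun _ => rfl) u m] at h1
      have h2 := congrArg (fun t => (M⁻¹ ^ m) *ᵥ t) h1
      simp only [Matrix.mulVec_add, Matrix.mulVec_mulVec, hpowcancel' m,
        Matrix.one_mulVec] at h2
      rw [← h2]
      abel
    have hlim1 : Filter.Tendsto (fun m => (cH u + ∑ k ∈ Finset.range m, fy k)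
        - (cH v + ∑ k ∈ Finset.range m, fx k)) Filter.atTop
        (nhds ((cH u + Ty) - (cH v + Tx))) :=
      (Filter.Tendsto.add tendsto_const_nhds hsy.hasSum.tendsto_sum_nat).sub
        (Filter.Tendsto.add tendsto_const_nhds hsx.hasSum.tendsto_sum_nat)
    have hlim0 : Filter.Tendsto (fun m => (cH u + ∑ k ∈ Finset.range m, fy k)
        - (cH v + ∑ k ∈ Finset.range m, fx k)) Filter.atTop (nhds 0) := by
      apply squeeze_zero_norm' (a := fun m => (C * Bb) * r ^ m)
      · refine Filter.eventually_atTop.2 ⟨1, fun m hm => ?_⟩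
        rw [hdiff m hm]
        calc ‖(M⁻¹ ^ m) *ᵥ cH (w m)‖ ≤ C * r ^ m * ‖cH (w m)‖ := hbound m _
          _ ≤ C * r ^ m * Bb := mul_le_mul_of_nonneg_left (hBb m) (by positivity)
          _ = (C * Bb) * r ^ m := by ring
      · simpa using (tendsto_pow_atTop_nhds_zero_of_lt_one hr0.le hr1).const_mul (C * Bb)
    have h4 := tendsto_nhds_unique hlim1 hlim0
    have h5 : cH u + Ty = cH v + Tx := sub_eq_zero.mp h4
    exact h5.symm
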